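/- arXiv:1306.5859 — 2 statements merged into one kernel-verified Lean document; each statement's English description precedes it below -/
import Mathlib

section
/- Let X be a metric space, C > 1 and α ≥ 0. Assume that for every ε > 0 there exists λ_ε > 0 such that for every x ∈ X and every λ > λ_ε there exist a pointed metric space (Y,y) and an ε-coupling between (X, λd, x) and (Y,y), where (Y,y) has the property that for every δ ∈ (0,1) the ball B_Y(y,2) can be covered by at most C(2/δ)^α balls of radius δ/2 with centers in Y. Then there exists a constant R' > 0 such that for every β > α there exists C' > 1 with dim_A(B(x,R'),C',R') ≤ β for every x ∈ X, where B(x,R') is regarded as a metric subspace of X. -/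
open Metric Set

/-- The set `A` in a space with distance function `d` has Nagata dimension at most `n`
with constant `c` at scale `s` (written `dim_N(A,c,s) ≤ n` in the paper): there is a
cover `𝒰 = ⋃_{k=0}^n 𝒰 k` of `A` by subsets of `A`, each member having diameter at
most `s`, such that each family `𝒰 k` is `c*s`-separated. -/
def dimNle {X : Type*} (d : X → X → ℝ) (A : Set X) (c s : ℝ) (n : ℕ) : Prop :=
  ∃ 𝒰 : Fin (n + 1) → Set (Set X),
    (∀ k, ∀ U ∈ 𝒰 k, U ⊆ A) ∧
    (∀ p ∈ A, ∃ k, ∃ U ∈ 𝒰 k, p ∈ U) ∧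
    (∀ k, ∀ U ∈ 𝒰 k, ∀ a ∈ U, ∀ b ∈ U, d a b ≤ s) ∧
    (∀ k, ∀ U ∈ 𝒰 k, ∀ V ∈ 𝒰 k, U ≠ V → ∀ a ∈ U, ∀ b ∈ V, c * s ≤ d a b)

/-- `dimAle d A C Rbar β` (written `dim_A(A,C,Rbar) ≤ β` in the paper): for all
`0 < r < R < Rbar` and every `x ∈ A`, the ball of radius `R` around `x` in `A` can be
covered by at most `C * (R/r)^β` balls of radius `r` with centers in `A`. -/
def dimAle {X : Type*} (d : X → X → ℝ) (A : Set X) (C Rbar β : ℝ) : Prop :=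
  ∀ r R : ℝ, 0 < r → r < R → R < Rbar → ∀ x ∈ A,
    ∃ T : Finset X, ↑T ⊆ A ∧ (T.card : ℝ) ≤ C * (R / r) ^ β ∧
      ∀ z ∈ A, d z x < R → ∃ t ∈ T, d z t < r

/-- `d` is a metric distance function on `Y`: symmetric, triangle inequality, and
vanishing exactly on the diagonal. -/
def IsMetricDist {Y : Type*} (d : Y → Y → ℝ) : Prop :=
  (∀ a b, d a b = d b a) ∧ (∀ a b c, d a c ≤ d a b + d b c) ∧ (∀ a b, d a b = 0 ↔ a = b)

/-- An `ε`-coupling between the pointed spaces `(A, dA, a₀)` and `(B, dB, b₀)`: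
a pseudometric on the disjoint union extending `dA` and `dB`, with `d(a₀,b₀) ≤ ε`,
every point of `B_A(a₀,1/ε)` within distance `< ε` of a point of `B`, and every point
of `B_B(b₀,1/ε)` within distance `< ε` of a point of `A`. -/
def IsCoupling {A B : Type*} (dA : A → A → ℝ) (dB : B → B → ℝ) (a₀ : A) (b₀ : B)
    (ε : ℝ) (d : A ⊕ B → A ⊕ B → ℝ) : Prop :=
  (∀ p q, d p q = d q p) ∧
  (∀ p, d p p = 0) ∧
  (∀ p q r, d p r ≤ d p q + d q r) ∧
  (∀ u v : A, d (Sum.inl u) (Sum.inl v) = dA u v) ∧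
  (∀ u v : B, d (Sum.inr u) (Sum.inr v) = dB u v) ∧
  d (Sum.inl a₀) (Sum.inr b₀) ≤ ε ∧
  (∀ u : A, dA u a₀ < 1 / ε → ∃ v : B, d (Sum.inl u) (Sum.inr v) < ε) ∧
  (∀ v : B, dB v b₀ < 1 / ε → ∃ u : A, d (Sum.inl u) (Sum.inr v) < ε)

universe u

lemma step_lemma {X : Type*} [MetricSpace X] (C α : ℝ)
    (hC : 1 < C) (hα : 0 ≤ α)
    (h : ∀ ε : ℝ, 0 < ε → ∃ lε : ℝ, 0 < lε ∧ ∀ x : X, ∀ lam : ℝ, lε < lam →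
      ∃ (Y : Type u) (dY : Y → Y → ℝ) (y : Y) (d : X ⊕ Y → X ⊕ Y → ℝ),
        IsMetricDist dY ∧
        (∀ δ : ℝ, δ ∈ Set.Ioo (0:ℝ) 1 → ∃ T : Finset Y,
          (T.card : ℝ) ≤ C * (2 / δ) ^ α ∧
          ∀ z : Y, dY z y < 2 → ∃ t ∈ T, dY z t < δ / 2) ∧
        IsCoupling (fun a b : X => lam * dist a b) dY x y ε d)
    (θ : ℝ) (hθ0 : 0 < θ) (hθ1 : θ ≤ 1/2) :
    ∃ P : ℝ, 0 < P ∧ ∀ ρ : ℝ, 0 < ρ → ρ < P → ∀ (z : X) (S : Set X), S ⊆ ball z ρ → z ∈ S →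
      ∃ T : Finset X, ↑T ⊆ S ∧ (T.card : ℝ) ≤ C * (3 / θ) ^ α ∧
        ∀ w ∈ S, ∃ t ∈ T, dist w t < θ * ρ := by
  classical
  set ε := θ / 12 with hε_def
  have hε0 : 0 < ε := by positivity
  have hε24 : ε ≤ 1 / 24 := by rw [hε_def]; linarith
  obtain ⟨lε, hlε0, hl⟩ := h ε hε0
  refine ⟨1 / lε, by positivity, ?_⟩
  intro ρ hρ hρP z S hSz hzS
  have hlam : lε < 1 / ρ := by
    rw [lt_div_iff₀ hρ]
    calc lε * ρ < lε * (1 / lε) := by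
          apply mul_lt_mul_of_pos_left hρP hlε0
      _ = 1 := by field_simp
  obtain ⟨Y, dY, y, d, hmet, hcover, hcoup⟩ := hl z (1 / ρ) hlam
  obtain ⟨dsymm, drefl, dtri, dXX, dYY, dxy, hXtoY, hYtoX⟩ := hcoup
  have hδmem : (2 * θ / 3 : ℝ) ∈ Set.Ioo (0:ℝ) 1 := ⟨by positivity, by linarith⟩
  obtain ⟨TY, hTYcard, hTYcov⟩ := hcover (2 * θ / 3) hδmem
  have hinvε : (24 : ℝ) ≤ 1 / ε := by
    rw [le_div_iff₀ hε0]; linarith [hε24]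
  -- function from Y back to X
  set f : Y → X := fun t => if ht : ∃ u : X, d (Sum.inl u) (Sum.inr t) < ε
    then ht.choose else z with hf_def
  -- recentering function
  set g : X → X := fun u => if hu : ∃ s ∈ S, dist s u < θ / 2 * ρ
    then hu.choose else z with hg_def
  refine ⟨(TY.image f).image g, ?_, ?_, ?_⟩
  · intro s hs
    simp only [Finset.coe_image, Set.mem_image, Finset.mem_coe] at hs
    obtain ⟨u, _, rfl⟩ := hs
    by_cases hu : ∃ s ∈ S, dist s u < θ / 2 * ρ
    · simp only [hg_def, dif_pos hu]; exact hu.choose_spec.1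
    · simp only [hg_def, dif_neg hu]; exact hzS
  · calc (((TY.image f).image g).card : ℝ) ≤ ((TY.image f).card : ℝ) := by
          exact_mod_cast Finset.card_image_le
      _ ≤ (TY.card : ℝ) := by exact_mod_cast Finset.card_image_le
      _ ≤ C * (2 / (2 * θ / 3)) ^ α := hTYcard
      _ = C * (3 / θ) ^ α := by
          congr 2
          field_simp
  · intro w hw
    have hwz : dist w z < ρ := mem_ball.1 (hSz hw)
    have hwz1 : (1 / ρ) * dist w z < 1 := by
      rw [div_mul_eq_mul_div, one_mul, div_lt_one hρ]; exact hwz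
    obtain ⟨v, hv⟩ := hXtoY w (lt_of_lt_of_le hwz1 (by linarith [hinvε]))
    have hvy : dY v y < 2 := by
      have h1 : d (Sum.inr v) (Sum.inr y) ≤ d (Sum.inr v) (Sum.inl w)
          + (d (Sum.inl w) (Sum.inl z) + d (Sum.inl z) (Sum.inr y)) := by
        calc d (Sum.inr v) (Sum.inr y) ≤ d (Sum.inr v) (Sum.inl w) + d (Sum.inl w) (Sum.inr y) :=
              dtri _ _ _
          _ ≤ d (Sum.inr v) (Sum.inl w) + (d (Sum.inl w) (Sum.inl z) + d (Sum.inl z) (Sum.inr y)) := by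
              linarith [dtri (Sum.inl w) (Sum.inl z) (Sum.inr y : X ⊕ Y)]
      rw [← dYY]
      have h2 : d (Sum.inr v) (Sum.inl w) < ε := by rw [dsymm]; exact hv
      have h3 : d (Sum.inl w) (Sum.inl z) < 1 := by rw [dXX]; exact hwz1
      have h4 : d (Sum.inl z) (Sum.inr y) ≤ ε := dxy
      linarith [hε24]
    obtain ⟨t, htTY, hvt⟩ := hTYcov v hvy
    have hty : dY t y < 1 / ε := by
      have h1 : dY t y ≤ dY t v + dY v y := hmet.2.1 t v y
      have h2 : dY t v = dY v t := hmet.1 t v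
      have h3 : dY t y < 2 * θ / 3 / 2 + 2 := by
        rw [h2] at h1; linarith [hvt, hvy]
      linarith [hinvε, hθ0.le, hθ1]
    obtain ⟨u, hu⟩ := hYtoX t hty
    have hft : d (Sum.inl (f t)) (Sum.inr t) < ε := by
      have hex : ∃ u : X, d (Sum.inl u) (Sum.inr t) < ε := ⟨u, hu⟩
      simp only [hf_def, dif_pos hex]
      exact hex.choose_spec
    have hwft : dist w (f t) < θ / 2 * ρ := by
      have hchain : d (Sum.inl w) (Sum.inl (f t)) ≤ d (Sum.inl w) (Sum.inr v)
          + (d (Sum.inr v) (Sum.inr t) + d (Sum.inr t) (Sum.inl (f t))) := by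
        calc d (Sum.inl w) (Sum.inl (f t)) ≤ d (Sum.inl w) (Sum.inr v) + d (Sum.inr v) (Sum.inl (f t)) := dtri _ _ _
          _ ≤ d (Sum.inl w) (Sum.inr v) + (d (Sum.inr v) (Sum.inr t) + d (Sum.inr t) (Sum.inl (f t))) := by
              linarith [dtri (Sum.inr v : X ⊕ Y) (Sum.inr t) (Sum.inl (f t))]
      rw [dXX] at hchain
      have h5 : d (Sum.inr v) (Sum.inr t) < 2 * θ / 3 / 2 := by rw [dYY]; exact hvt
      have h6 : d (Sum.inr t) (Sum.inl (f t)) < ε := by rw [dsymm]; exact hft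
      have h7 : (1 / ρ) * dist w (f t) < θ / 2 := by
        have : (1 / ρ) * dist w (f t) ≤ d (Sum.inl w) (Sum.inr v)
            + (d (Sum.inr v) (Sum.inr t) + d (Sum.inr t) (Sum.inl (f t))) := hchain
        have hεθ : ε = θ / 12 := hε_def
        linarith [hv]
      calc dist w (f t) = ρ * ((1 / ρ) * dist w (f t)) := by field_simp
        _ < ρ * (θ / 2) := by apply mul_lt_mul_of_pos_left h7 hρ
        _ = θ / 2 * ρ := by ring
    -- recenter
    have hexS : ∃ s ∈ S, dist s (f t) < θ / 2 * ρ := ⟨w, hw, hwft⟩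
    refine ⟨g (f t), ?_, ?_⟩
    · exact Finset.mem_image_of_mem g (Finset.mem_image_of_mem f htTY)
    · have hgs := hexS.choose_spec
      simp only [hg_def, dif_pos hexS]
      calc dist w hexS.choose ≤ dist w (f t) + dist hexS.choose (f t) := by
            rw [dist_comm hexS.choose]; exact dist_triangle _ _ _
        _ < θ / 2 * ρ + θ / 2 * ρ := by linarith [hgs.2]
        _ = θ * ρ := by ring


lemma cover_comp {X : Type*} [MetricSpace X] (S : Set X) (N M ρ r : ℝ)
    (hM : 0 ≤ M)
    (T₀ : Finset X) (hcard : (T₀.card : ℝ) ≤ N)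
    (hT₀S : ↑T₀ ⊆ S)
    (hcov : ∀ w ∈ S, ∃ t ∈ T₀, dist w t < ρ)
    (hstep : ∀ t ∈ T₀, ∃ Tt : Finset X, ↑Tt ⊆ {w ∈ S | dist w t < ρ} ∧
      (Tt.card : ℝ) ≤ M ∧ ∀ w ∈ S, dist w t < ρ → ∃ s ∈ Tt, dist w s < r) :
    ∃ T : Finset X, ↑T ⊆ S ∧ (T.card : ℝ) ≤ N * M ∧ ∀ w ∈ S, ∃ t ∈ T, dist w t < r := by
  classical
  have F : ∀ t : X, ∃ Tt : Finset X, (t ∈ T₀ → (↑Tt ⊆ {w ∈ S | dist w t < ρ} ∧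
      (Tt.card : ℝ) ≤ M ∧ ∀ w ∈ S, dist w t < ρ → ∃ s ∈ Tt, dist w s < r)) := by
    intro t
    by_cases ht : t ∈ T₀
    · obtain ⟨Tt, h1, h2, h3⟩ := hstep t ht
      exact ⟨Tt, fun _ => ⟨h1, h2, h3⟩⟩
    · exact ⟨∅, fun h => absurd h ht⟩
  choose f hf using F
  refine ⟨T₀.biUnion f, ?_, ?_, ?_⟩
  · intro s hs
    simp only [Finset.coe_biUnion, Set.mem_iUnion, Finset.mem_coe] at hs
    obtain ⟨t, ht, hst⟩ := hs
    exact ((hf t ht).1 hst).1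
  · calc ((T₀.biUnion f).card : ℝ) ≤ ∑ t ∈ T₀, ((f t).card : ℝ) := by
          exact_mod_cast Finset.card_biUnion_le
      _ ≤ ∑ _t ∈ T₀, M := Finset.sum_le_sum (fun t ht => (hf t ht).2.1)
      _ = (T₀.card : ℝ) * M := by rw [Finset.sum_const, nsmul_eq_mul]
      _ ≤ N * M := by apply mul_le_mul_of_nonneg_right hcard hM
  · intro w hw
    obtain ⟨t, ht, hwt⟩ := hcov w hw
    obtain ⟨s, hs, hws⟩ := (hf t ht).2.2 w hw hwt
    exact ⟨s, Finset.mem_biUnion.2 ⟨t, ht, hs⟩, hws⟩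


lemma cover_iterate {X : Type*} [MetricSpace X] (M θ P : ℝ) (hM : 0 ≤ M)
    (hθ0 : 0 < θ) (hθ1 : θ < 1)
    (step : ∀ ρ : ℝ, 0 < ρ → ρ < P → ∀ (z : X) (S : Set X), S ⊆ ball z ρ → z ∈ S →
      ∃ T : Finset X, ↑T ⊆ S ∧ (T.card : ℝ) ≤ M ∧ ∀ w ∈ S, ∃ t ∈ T, dist w t < θ * ρ) :
    ∀ (k : ℕ) (ρ : ℝ), 0 < ρ → ρ < P → ∀ (z : X) (S : Set X), S ⊆ ball z ρ → z ∈ S →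
      ∃ T : Finset X, ↑T ⊆ S ∧ (T.card : ℝ) ≤ M ^ k ∧
        ∀ w ∈ S, ∃ t ∈ T, dist w t < θ ^ k * ρ := by
  intro k
  induction k with
  | zero =>
    intro ρ hρ hρP z S hSz hzS
    exact ⟨{z}, by simpa using hzS, by simp, fun w hw =>
      ⟨z, Finset.mem_singleton_self z, by simpa using hSz hw⟩⟩
  | succ k ih =>
    intro ρ hρ hρP z S hSz hzS
    obtain ⟨T₀, hT₀S, hT₀card, hT₀cov⟩ := step ρ hρ hρP z S hSz hzS
    have hcomp := cover_comp S M (M ^ k) (θ * ρ) (θ ^ (k + 1) * ρ)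
      (pow_nonneg hM k) T₀ hT₀card hT₀S hT₀cov ?_
    · obtain ⟨T, h1, h2, h3⟩ := hcomp
      exact ⟨T, h1, by rw [pow_succ, mul_comm (M ^ k)] at *; exact h2, h3⟩
    · intro t ht
      have htS : t ∈ S := hT₀S ht
      have h1 : (0:ℝ) < θ * ρ := mul_pos hθ0 hρ
      have h2 : θ * ρ < P := lt_trans (by nlinarith) hρP
      obtain ⟨Tt, ha, hb, hc⟩ := ih (θ * ρ) h1 h2 t {w ∈ S | dist w t < θ * ρ}
        (fun w hw => mem_ball.2 hw.2) ⟨htS, by simp [hρ, hθ0, mul_pos hθ0 hρ]⟩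
      refine ⟨Tt, ha, hb, fun w hw hwt => ?_⟩
      obtain ⟨s, hs, hws⟩ := hc w ⟨hw, hwt⟩
      exact ⟨s, hs, by calc dist w s < θ ^ k * (θ * ρ) := hws
        _ = θ ^ (k+1) * ρ := by ring⟩



set_option maxHeartbeats 1000000 in
/-- If `X` has uniformly close tangents whose unit balls around the base
point can be uniformly covered (at most `C(2/δ)^α` balls of radius `δ/2` cover
`B_Y(y,2)`), then there is `R' > 0` such that for every `β > α` there is `C' > 1` with
`dim_A(B(x,R'),C',R') ≤ β` for every `x ∈ X`. -/
theorem assouad_from_uniform_tangents {X : Type*} [MetricSpace X] (C α : ℝ)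
    (hC : 1 < C) (hα : 0 ≤ α)
    (h : ∀ ε : ℝ, 0 < ε → ∃ lε : ℝ, 0 < lε ∧ ∀ x : X, ∀ lam : ℝ, lε < lam →
      ∃ (Y : Type u) (dY : Y → Y → ℝ) (y : Y) (d : X ⊕ Y → X ⊕ Y → ℝ),
        IsMetricDist dY ∧
        (∀ δ : ℝ, δ ∈ Set.Ioo (0:ℝ) 1 → ∃ T : Finset Y,
          (T.card : ℝ) ≤ C * (2 / δ) ^ α ∧
          ∀ z : Y, dY z y < 2 → ∃ t ∈ T, dY z t < δ / 2) ∧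
        IsCoupling (fun a b : X => lam * dist a b) dY x y ε d) :
    ∃ R' : ℝ, 0 < R' ∧ ∀ β : ℝ, α < β → ∃ C' : ℝ, 1 < C' ∧
      ∀ x : X, dimAle (fun a b : X => dist a b) (Metric.ball x R') C' R' β := by
  classical
  obtain ⟨P₀, hP₀, step₀⟩ := step_lemma C α hC hα h (1/2) (by norm_num) (le_refl _)
  set M₀ : ℝ := C * (3 / (1/2 : ℝ)) ^ α with hM₀_def
  have h6α : (1:ℝ) ≤ (3 / (1/2 : ℝ)) ^ α := Real.one_le_rpow (by norm_num) hα
  have hM₀1 : 1 ≤ M₀ := by nlinarith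
  have hM₀0 : 0 ≤ M₀ := by linarith
  refine ⟨P₀, hP₀, ?_⟩
  intro β hβ
  set c₀ : ℝ := C * (3:ℝ) ^ α with hc₀_def
  have h3α : (1:ℝ) ≤ (3:ℝ) ^ α := Real.one_le_rpow (by norm_num) hα
  have hc₀1 : 1 < c₀ := by nlinarith
  have hc₀0 : 0 < c₀ := by linarith
  set θ₀ : ℝ := min (1/2) (c₀ ^ (-(β - α)⁻¹)) with hθ₀_def
  have hθ₀pos : 0 < θ₀ := lt_min (by norm_num) (Real.rpow_pos_of_pos hc₀0 _)
  have hθ₀half : θ₀ ≤ 1/2 := min_le_left _ _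
  have hθ₀lt1 : θ₀ < 1 := lt_of_le_of_lt hθ₀half (by norm_num)
  have hβα : 0 < β - α := by linarith
  have hβ0 : 0 ≤ β := le_trans hα hβ.le
  have hkey : c₀ ≤ θ₀ ^ (α - β) := by
    have h1 : θ₀ ≤ c₀ ^ (-(β - α)⁻¹) := min_le_right _ _
    have h2 := Real.rpow_le_rpow_of_nonpos hθ₀pos h1 (by linarith : α - β ≤ 0)
    calc c₀ = c₀ ^ ((-(β - α)⁻¹) * (α - β)) := by
          rw [show (-(β - α)⁻¹) * (α - β) = (β - α)⁻¹ * (β - α) by ring,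
            inv_mul_cancel₀ (ne_of_gt hβα), Real.rpow_one]
      _ = (c₀ ^ (-(β - α)⁻¹)) ^ (α - β) := Real.rpow_mul hc₀0.le _ _
      _ ≤ θ₀ ^ (α - β) := h2
  set M₁ : ℝ := C * (3 / θ₀) ^ α with hM₁_def
  have h3θ : (1:ℝ) ≤ 3 / θ₀ := by
    rw [le_div_iff₀ hθ₀pos]; linarith
  have h3θα : (1:ℝ) ≤ (3 / θ₀) ^ α := Real.one_le_rpow h3θ hα
  have hM₁1 : 1 ≤ M₁ := by nlinarith
  have hM₁0 : 0 ≤ M₁ := by linarith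
  have hθ₀α : (0:ℝ) < θ₀ ^ α := Real.rpow_pos_of_pos hθ₀pos α
  have hθ₀β : (0:ℝ) < θ₀ ^ β := Real.rpow_pos_of_pos hθ₀pos β
  have hM₁le : M₁ ≤ (θ₀⁻¹) ^ β := by
    rw [hM₁_def, Real.div_rpow (by norm_num) hθ₀pos.le, Real.inv_rpow hθ₀pos.le]
    have heq : C * ((3:ℝ) ^ α / θ₀ ^ α) = c₀ / θ₀ ^ α := by rw [hc₀_def]; ring
    rw [heq, div_le_iff₀ hθ₀α]
    rw [Real.rpow_sub hθ₀pos, div_eq_inv_mul] at hkey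
    exact hkey
  obtain ⟨P₁, hP₁, step₁⟩ := step_lemma C α hC hα h θ₀ hθ₀pos hθ₀half
  obtain ⟨j₀, hj₀⟩ := exists_pow_lt_of_lt_one (show (0:ℝ) < P₁ / P₀ by positivity)
    (show (1:ℝ)/2 < 1 by norm_num)
  refine ⟨max (M₀ ^ j₀ * M₁) 2, lt_of_lt_of_le one_lt_two (le_max_right _ _), ?_⟩
  set C' : ℝ := max (M₀ ^ j₀ * M₁) 2 with hC'_def
  have hC'0 : 0 < C' := lt_of_lt_of_le two_pos (le_max_right _ _)
  intro x r R hr hrR hRP₀ z hz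
  have hR0 : 0 < R := hr.trans hrR
  set S : Set X := {w ∈ Metric.ball x P₀ | dist w z < R} with hS_def
  have hzS : z ∈ S := ⟨hz, by simpa using hR0⟩
  have hSz : S ⊆ Metric.ball z R := fun w hw => mem_ball.2 hw.2
  -- Phase 1
  obtain ⟨T₀, hT₀S, hT₀card, hT₀cov⟩ := cover_iterate M₀ (1/2) P₀ hM₀0 (by norm_num)
    (by norm_num) step₀ j₀ R hR0 hRP₀ z S hSz hzS
  set ρ₁ : ℝ := (1/2 : ℝ) ^ j₀ * R with hρ₁_def
  have hρ₁pos : 0 < ρ₁ := by positivity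
  have hρ₁P₁ : ρ₁ < P₁ := by
    have h1 : ((1:ℝ)/2) ^ j₀ * R < ((1:ℝ)/2) ^ j₀ * P₀ :=
      mul_lt_mul_of_pos_left hRP₀ (by positivity)
    have h2 : ((1:ℝ)/2) ^ j₀ * P₀ < P₁ := by
      rw [lt_div_iff₀ hP₀] at hj₀
      linarith
    linarith
  have hρ₁R : ρ₁ ≤ R := by
    rw [hρ₁_def]
    calc ((1:ℝ)/2) ^ j₀ * R ≤ 1 * R := by
          apply mul_le_mul_of_nonneg_right _ hR0.le
          exact pow_le_one₀ (by norm_num) (by norm_num)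
      _ = R := one_mul R
  -- Phase 2 : number of fine steps
  have hexk : ∃ k : ℕ, θ₀ ^ k * ρ₁ ≤ r := by
    obtain ⟨n, hn⟩ := exists_pow_lt_of_lt_one (show (0:ℝ) < r / ρ₁ by positivity) hθ₀lt1
    exact ⟨n, ((lt_div_iff₀ hρ₁pos).mp hn).le⟩
  set k : ℕ := Nat.find hexk with hk_def
  have hk : θ₀ ^ k * ρ₁ ≤ r := Nat.find_spec hexk
  -- apply fine covering inside each ball of the coarse cover
  have hstep2 : ∀ t ∈ T₀, ∃ Tt : Finset X, ↑Tt ⊆ {w ∈ S | dist w t < ρ₁} ∧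
      (Tt.card : ℝ) ≤ M₁ ^ k ∧ ∀ w ∈ S, dist w t < ρ₁ → ∃ s ∈ Tt, dist w s < θ₀ ^ k * ρ₁ := by
    intro t ht
    have htS : t ∈ S := hT₀S ht
    obtain ⟨Tt, ha, hb, hc⟩ := cover_iterate M₁ θ₀ P₁ hM₁0 hθ₀pos hθ₀lt1 step₁ k ρ₁
      hρ₁pos hρ₁P₁ t {w ∈ S | dist w t < ρ₁} (fun w hw => mem_ball.2 hw.2)
      ⟨htS, by simpa using hρ₁pos⟩
    exact ⟨Tt, ha, hb, fun w hw hwt => hc w ⟨hw, hwt⟩⟩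
  obtain ⟨T, hTS, hTcard, hTcov⟩ := cover_comp S (M₀ ^ j₀) (M₁ ^ k) ρ₁ (θ₀ ^ k * ρ₁)
    (by positivity) T₀ hT₀card hT₀S hT₀cov hstep2
  refine ⟨T, fun w hw => (hTS hw).1, ?_, ?_⟩
  · -- cardinality bound
    have hRr1 : (1:ℝ) ≤ R / r := by rw [le_div_iff₀ hr]; linarith
    have hRrβ : (1:ℝ) ≤ (R / r) ^ β := Real.one_le_rpow hRr1 hβ0
    have hRrβ0 : (0:ℝ) ≤ (R / r) ^ β := by linarith
    rcases Nat.eq_zero_or_pos k with hk0 | hkpos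
    · rw [hk0] at hTcard
      simp only [pow_zero, mul_one] at hTcard
      calc (T.card : ℝ) ≤ M₀ ^ j₀ := hTcard
        _ ≤ M₀ ^ j₀ * M₁ := le_mul_of_one_le_right (by positivity) hM₁1
        _ ≤ C' := le_max_left _ _
        _ = C' * 1 := (mul_one C').symm
        _ ≤ C' * (R / r) ^ β := by
            apply mul_le_mul_of_nonneg_left hRrβ hC'0.le
    · obtain ⟨m, hm⟩ := Nat.exists_eq_succ_of_ne_zero hkpos.ne'
      have hmlt : m < Nat.find hexk := by rw [← hk_def, hm]; exact Nat.lt_succ_self m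
      have hmin : r < θ₀ ^ m * ρ₁ := not_le.mp (Nat.find_min hexk hmlt)
      have h1 : (θ₀⁻¹) ^ m ≤ R / r := by
        have h2 : r < θ₀ ^ m * R :=
          lt_of_lt_of_le hmin (mul_le_mul_of_nonneg_left hρ₁R (by positivity))
        rw [inv_pow, inv_eq_one_div, div_le_div_iff₀ (pow_pos hθ₀pos m) hr]
        have := mul_comm (θ₀ ^ m) R
        linarith
      have h2 : M₁ ^ m ≤ (R / r) ^ β := by
        calc M₁ ^ m ≤ ((θ₀⁻¹) ^ β) ^ m := pow_le_pow_left₀ hM₁0 hM₁le m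
          _ = ((θ₀⁻¹) ^ m) ^ β := by
              rw [← Real.rpow_natCast ((θ₀⁻¹) ^ β) m, ← Real.rpow_mul (by positivity),
                mul_comm, Real.rpow_mul (by positivity), Real.rpow_natCast]
          _ ≤ (R / r) ^ β := Real.rpow_le_rpow (by positivity) h1 hβ0
      calc (T.card : ℝ) ≤ M₀ ^ j₀ * M₁ ^ k := hTcard
        _ = M₀ ^ j₀ * (M₁ * M₁ ^ m) := by rw [hm, pow_succ, mul_comm (M₁ ^ m)]
        _ ≤ M₀ ^ j₀ * (M₁ * (R / r) ^ β) := by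
            apply mul_le_mul_of_nonneg_left _ (by positivity)
            exact mul_le_mul_of_nonneg_left h2 hM₁0
        _ = (M₀ ^ j₀ * M₁) * (R / r) ^ β := by ring
        _ ≤ C' * (R / r) ^ β := mul_le_mul_of_nonneg_right (le_max_left _ _) hRrβ0
  · -- covering
    intro w hw hwz
    obtain ⟨t, htT, hwt⟩ := hTcov w ⟨hw, hwz⟩
    exact ⟨t, htT, lt_of_lt_of_le hwt hk⟩
end

section
/- Let X be a metric space and K ⊆ X. Assume K has finite linearly controlled dimension: there exist c̄ ∈ (0,1), s̄ > 0 and n̄ ∈ ℕ such that dim_N(K,c̄,s) ≤ n̄ for all 0 < s ≤ s̄. Assume furthermore that there exist n ∈ ℕ, c ∈ (0,1) and s₀ > 0 such that for every ε > 0 there exists λ_ε > 0 with the property: for every x ∈ K and every λ ≥ λ_ε there exist a pointed metric space (Y,⋆) satisfying dim_N(B_Y(⋆,1),c,s) ≤ n for all 0 < s < s₀, and an ε-coupling between (X, λd, x) and (Y,⋆). Then K has linearly controlled dimension at most n: there exist c' > 0 and t₀ > 0 such that dim_N(K,c',t) ≤ n for all 0 < t < t₀. -/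
open Metric Set

lemma glue_lemma {X : Type*} [MetricSpace X] {A B : Set X} {n : ℕ} {a b σ : ℝ}
    (ha : 0 < a) (ha1 : a ≤ 1) (hb : 0 < b) (hb1 : b ≤ 1) (hσ : 0 < σ)
    (hA : dimNle (fun p q : X => dist p q) A a σ n)
    (hB : dimNle (fun p q : X => dist p q) B b (a * σ / 8) n) :
    dimNle (fun p q : X => dist p q) (A ∪ B) (a * b / 16) (2 * σ) n := by
  classical
  obtain ⟨𝒰, hUsub, hUcov, hUdiam0, hUsep0⟩ := hA
  obtain ⟨𝒱, hVsub, hVcov, hVdiam0, hVsep0⟩ := hB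
  have hUdiam : ∀ k U, U ∈ 𝒰 k → ∀ p ∈ U, ∀ q ∈ U, dist p q ≤ σ := hUdiam0
  have hUsep : ∀ k U, U ∈ 𝒰 k → ∀ V, V ∈ 𝒰 k → U ≠ V → ∀ p ∈ U, ∀ q ∈ V,
      a * σ ≤ dist p q := hUsep0
  have hVdiam : ∀ k V, V ∈ 𝒱 k → ∀ p ∈ V, ∀ q ∈ V, dist p q ≤ a * σ / 8 := hVdiam0
  have hVsep : ∀ k V, V ∈ 𝒱 k → ∀ V', V' ∈ 𝒱 k → V ≠ V' → ∀ p ∈ V, ∀ q ∈ V',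
      b * (a * σ / 8) ≤ dist p q := hVsep0
  set γ : ℝ := a * σ / 4 with hγdef
  let P : Fin (n + 1) → Set X → Prop :=
    fun k V => ∃ U, U ∈ 𝒰 k ∧ ∃ v, v ∈ V ∧ ∃ u, u ∈ U ∧ dist v u < γ
  have hgex : ∀ k V, ∃ U : Set X,
      P k V → U ∈ 𝒰 k ∧ ∃ v, v ∈ V ∧ ∃ u, u ∈ U ∧ dist v u < γ := by
    intro k V
    by_cases h : P k V
    · exact ⟨h.choose, fun _ => h.choose_spec⟩
    · exact ⟨∅, fun h' => absurd h' h⟩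
  choose g hg using hgex
  let T : Fin (n + 1) → Set X → Set X :=
    fun k U => U ∪ {p | ∃ V, V ∈ 𝒱 k ∧ P k V ∧ g k V = U ∧ p ∈ V}
  have hTmem : ∀ k U p, p ∈ T k U ↔
      (p ∈ U ∨ ∃ V, V ∈ 𝒱 k ∧ P k V ∧ g k V = U ∧ p ∈ V) := fun _ _ _ => Iff.rfl
  have happrox : ∀ k U, U ∈ 𝒰 k → ∀ p ∈ T k U, ∃ u, u ∈ U ∧ dist p u ≤ 3 * (a * σ) / 8 := by
    intro k U hU p hp
    rcases (hTmem k U p).mp hp with hp | ⟨V, hV, hPV, hgV, hpV⟩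
    · refine ⟨p, hp, ?_⟩
      rw [dist_self]; positivity
    · obtain ⟨-, v₀, hv₀, u₀, hu₀, hdvu⟩ := hg k V hPV
      rw [hgV] at hu₀
      refine ⟨u₀, hu₀, ?_⟩
      have h1 : dist p v₀ ≤ a * σ / 8 := hVdiam k V hV p hpV v₀ hv₀
      have h2 : dist p u₀ ≤ dist p v₀ + dist v₀ u₀ := dist_triangle _ _ _
      linarith
  refine ⟨fun k => {S | ∃ U, U ∈ 𝒰 k ∧ S = T k U} ∪ {V | V ∈ 𝒱 k ∧ ¬ P k V},
    ?_, ?_, ?_, ?_⟩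
  · rintro k S hS
    rcases hS with ⟨U, hU, rfl⟩ | ⟨hV, -⟩
    · intro p hp
      rcases (hTmem k U p).mp hp with hp | ⟨V, hV, -, -, hpV⟩
      · exact Or.inl (hUsub k U hU hp)
      · exact Or.inr (hVsub k V hV hpV)
    · exact fun p hp => Or.inr (hVsub k S hV hp)
  · intro p hp
    rcases hp with hp | hp
    · obtain ⟨k, U, hU, hpU⟩ := hUcov p hp
      exact ⟨k, T k U, Or.inl ⟨U, hU, rfl⟩, Or.inl hpU⟩
    · obtain ⟨k, V, hV, hpV⟩ := hVcov p hp
      by_cases hPV : P k V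
      · refine ⟨k, T k (g k V), Or.inl ⟨g k V, (hg k V hPV).1, rfl⟩, ?_⟩
        exact Or.inr ⟨V, hV, hPV, rfl, hpV⟩
      · exact ⟨k, V, Or.inr ⟨hV, hPV⟩, hpV⟩
  · rintro k S hS p hp q hq
    show dist p q ≤ 2 * σ
    have haσ : a * σ ≤ σ := by nlinarith
    rcases hS with ⟨U, hU, rfl⟩ | ⟨hV, -⟩
    · obtain ⟨up, hup, hdp⟩ := happrox k U hU p hp
      obtain ⟨uq, huq, hdq⟩ := happrox k U hU q hq
      have h1 : dist up uq ≤ σ := hUdiam k U hU up hup uq huq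
      have h2 : dist p q ≤ dist p up + dist up uq + dist uq q := dist_triangle4 _ _ _ _
      have h3 : dist uq q = dist q uq := dist_comm _ _
      linarith
    · have h1 : dist p q ≤ a * σ / 8 := hVdiam k S hV p hp q hq
      linarith
  · rintro k S hS S' hS' hne p hp q hq
    show a * b / 16 * (2 * σ) ≤ dist p q
    have hkey : a * b / 16 * (2 * σ) = a * b * σ / 8 := by ring
    have habσ : a * b * σ / 8 ≤ a * σ / 4 := by nlinarith [mul_pos ha hσ]
    have key1 : ∀ U, U ∈ 𝒰 k → ∀ V₀, V₀ ∈ 𝒱 k → ¬ P k V₀ →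
        ∀ p' ∈ T k U, ∀ q' ∈ V₀, a * b / 16 * (2 * σ) ≤ dist p' q' := by
      intro U hU V₀ hV₀ hnP p' hp' q' hq'
      rcases (hTmem k U p').mp hp' with hpU | ⟨V, hV, hPV, hgV, hpV⟩
      · have hge : ¬ dist q' p' < γ := fun hlt => hnP ⟨U, hU, q', hq', p', hpU, hlt⟩
        push_neg at hge
        have h2 : dist q' p' = dist p' q' := dist_comm _ _
        rw [hkey]
        have : γ = a * σ / 4 := hγdef
        linarith
      · have hVne : V ≠ V₀ := fun h => hnP (h ▸ hPV)
        have h1 : b * (a * σ / 8) ≤ dist p' q' := hVsep k V hV V₀ hV₀ hVne p' hpV q' hq'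
        have e : a * b / 16 * (2 * σ) = b * (a * σ / 8) := by ring
        linarith [e ▸ h1]
    rcases hS with ⟨U, hU, rfl⟩ | ⟨hV₀, hnP⟩
    · rcases hS' with ⟨U', hU', rfl⟩ | ⟨hV₀', hnP'⟩
      · have hUne : U ≠ U' := by
          rintro rfl; exact hne rfl
        obtain ⟨up, hup, hdp⟩ := happrox k U hU p hp
        obtain ⟨uq, huq, hdq⟩ := happrox k U' hU' q hq
        have hsep : a * σ ≤ dist up uq := hUsep k U hU U' hU' hUne up hup uq huq
        have h4 : dist up uq ≤ dist up p + dist p q + dist q uq := dist_triangle4 _ _ _ _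
        have e1 : dist up p = dist p up := dist_comm _ _
        have h5 : a * σ / 4 ≤ dist p q := by linarith
        linarith [hkey ▸ le_refl (a*b/16*(2*σ))]
      · exact key1 U hU S' hV₀' hnP' p hp q hq
    · rcases hS' with ⟨U', hU', rfl⟩ | ⟨hV₀', hnP'⟩
      · rw [dist_comm]
        exact key1 U' hU' S hV₀ hnP q hq p hp
      · have hVne : S ≠ S' := hne
        have h1 : b * (a * σ / 8) ≤ dist p q := hVsep k S hV₀ S' hV₀' hVne p hp q hq
        have e : a * b / 16 * (2 * σ) = b * (a * σ / 8) := by ring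
        linarith

lemma lemD {X : Type*} [MetricSpace X] {K : Set X} {n : ℕ} {c₁ cb r₁ s τ : ℝ}
    (hc₁ : 0 < c₁) (hcb : 0 < cb) (hτ : 0 < τ) (hτs : τ ≤ s) (hsτ : s ≤ r₁ * τ)
    {𝒰 : Set (Set X)}
    (hsub : ∀ U ∈ 𝒰, U ⊆ K)
    (hdiam : ∀ U ∈ 𝒰, ∀ p ∈ U, ∀ q ∈ U, dist p q ≤ s)
    (hsep : ∀ U ∈ 𝒰, ∀ V ∈ 𝒰, U ≠ V → ∀ p ∈ U, ∀ q ∈ V, cb * s ≤ dist p q)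
    (hL1 : ∀ x ∈ K, dimNle (fun p q : X => dist p q) (K ∩ {z | dist z x ≤ r₁ * τ}) c₁ τ n) :
    dimNle (fun p q : X => dist p q) (⋃₀ 𝒰) (min c₁ cb) τ n := by
  classical
  have hex : ∀ U ∈ 𝒰, ∃ 𝒲 : Fin (n + 1) → Set (Set X),
      (∀ p ∈ U, ∃ k, ∃ W ∈ 𝒲 k, p ∈ W) ∧
      (∀ k, ∀ W ∈ 𝒲 k, ∀ p ∈ W, ∀ q ∈ W, dist p q ≤ τ) ∧
      (∀ k, ∀ W ∈ 𝒲 k, ∀ W' ∈ 𝒲 k, W ≠ W' → ∀ p ∈ W, ∀ q ∈ W', c₁ * τ ≤ dist p q) := by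
    intro U hU
    rcases U.eq_empty_or_nonempty with rfl | ⟨x₀, hx₀⟩
    · exact ⟨fun _ => ∅, by simp, by simp, by simp⟩
    · obtain ⟨𝒲, hWsub, hWcov, hWdiam, hWsep⟩ := hL1 x₀ (hsub U hU hx₀)
      refine ⟨𝒲, ?_, hWdiam, hWsep⟩
      intro p hp
      exact hWcov p ⟨hsub U hU hp, le_trans (hdiam U hU p hp x₀ hx₀) hsτ⟩
  choose! 𝒲f h1 h2 h3 using hex
  refine ⟨fun k => {S | ∃ U, U ∈ 𝒰 ∧ ∃ W, W ∈ 𝒲f U k ∧ S = W ∩ U}, ?_, ?_, ?_, ?_⟩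
  · rintro k S ⟨U, hU, W, hW, rfl⟩ p ⟨hpW, hpU⟩
    exact ⟨U, hU, hpU⟩
  · rintro p ⟨U, hU, hpU⟩
    obtain ⟨k, W, hW, hpW⟩ := h1 U hU p hpU
    exact ⟨k, W ∩ U, ⟨U, hU, W, hW, rfl⟩, hpW, hpU⟩
  · rintro k S ⟨U, hU, W, hW, rfl⟩ p ⟨hpW, -⟩ q ⟨hqW, -⟩
    exact h2 U hU k W hW p hpW q hqW
  · rintro k S ⟨U, hU, W, hW, rfl⟩ S' ⟨U', hU', W', hW', rfl⟩ hne p ⟨hpW, hpU⟩ q ⟨hqW', hqU'⟩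
    show min c₁ cb * τ ≤ dist p q
    by_cases hUU : U = U'
    · subst hUU
      have hWW : W ≠ W' := by rintro rfl; exact hne rfl
      have h := h3 U hU k W hW W' hW' hWW p hpW q hqW'
      calc min c₁ cb * τ ≤ c₁ * τ := mul_le_mul_of_nonneg_right (min_le_left _ _) hτ.le
        _ ≤ dist p q := h
    · have h := hsep U hU U' hU' hUU p hpU q hqU'
      calc min c₁ cb * τ ≤ cb * τ := mul_le_mul_of_nonneg_right (min_le_right _ _) hτ.le
        _ ≤ cb * s := mul_le_mul_of_nonneg_left hτs hcb.le
        _ ≤ dist p q := h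

universe u

lemma lemL1 {X : Type*} [MetricSpace X] (K : Set X) (n : ℕ) (c s₀ : ℝ)
    (hc : c ∈ Set.Ioo (0:ℝ) 1) (hs₀ : 0 < s₀)
    (htan : ∀ ε : ℝ, 0 < ε → ∃ lε : ℝ, 0 < lε ∧ ∀ x ∈ K, ∀ lam : ℝ, lε ≤ lam →
      ∃ (Y : Type u) (dY : Y → Y → ℝ) (y : Y) (d : X ⊕ Y → X ⊕ Y → ℝ),
        IsMetricDist dY ∧
        (∀ s : ℝ, 0 < s → s < s₀ → dimNle dY {z : Y | dY z y < 1} c s n) ∧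
        IsCoupling (fun a b : X => lam * dist a b) dY x y ε d)
    (r₁ : ℝ) (hr₁ : 1 ≤ r₁) :
    ∃ t₁ : ℝ, 0 < t₁ ∧ ∀ τ : ℝ, 0 < τ → τ < t₁ → ∀ x ∈ K,
      dimNle (fun p q : X => dist p q) (K ∩ {z | dist z x ≤ r₁ * τ}) (c / 2) τ n := by
  classical
  obtain ⟨hc0, hc1⟩ := hc
  have hr₁0 : 0 < r₁ := lt_of_lt_of_le one_pos hr₁
  set s' : ℝ := min (s₀ / 2) (1 / (4 * r₁)) with hs'def
  have hs'pos : 0 < s' := lt_min (by linarith) (by positivity)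
  have hs's₀ : s' < s₀ := lt_of_le_of_lt (min_le_left _ _) (by linarith)
  have hs'r : r₁ * s' ≤ 1 / 4 := by
    have h := min_le_right (s₀ / 2) (1 / (4 * r₁))
    calc r₁ * s' ≤ r₁ * (1 / (4 * r₁)) := mul_le_mul_of_nonneg_left h hr₁0.le
      _ = 1 / 4 := by field_simp
  have hs'le : s' ≤ 1 / 4 := by nlinarith
  set ε : ℝ := c * s' / 8 with hεdef
  have hεpos : 0 < ε := by positivity
  have hεs' : ε ≤ s' / 8 := by rw [hεdef]; nlinarith
  obtain ⟨lam0, hlam0, hprop⟩ := htan ε hεpos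
  refine ⟨(s' + 2 * ε) / lam0, by positivity, ?_⟩
  intro τ hτ hτlt x hx
  set lam : ℝ := (s' + 2 * ε) / τ with hlamdef
  have hlampos : 0 < lam := by positivity
  have hlamτ : lam * τ = s' + 2 * ε := div_mul_cancel₀ _ hτ.ne'
  have hlamge : lam0 ≤ lam := by
    rw [hlamdef, le_div_iff₀ hτ]
    have h := (lt_div_iff₀ hlam0).mp hτlt
    nlinarith
  obtain ⟨Y, dY, y, d, hmet, hdim, hcoup⟩ := hprop x hx lam hlamge
  obtain ⟨hsymm, hzero, htri, hXX0, hYY, hxy, hXY0, hYX⟩ := hcoup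
  have hXX : ∀ u v : X, d (Sum.inl u) (Sum.inl v) = lam * dist u v := hXX0
  have hXY : ∀ u : X, lam * dist u x < 1 / ε → ∃ v : Y, d (Sum.inl u) (Sum.inr v) < ε := hXY0
  obtain ⟨𝒱, hVsub, hVcov0, hVdiam0, hVsep0⟩ := hdim s' hs'pos hs's₀
  have hVcov : ∀ p : Y, dY p y < 1 → ∃ k, ∃ V, V ∈ 𝒱 k ∧ p ∈ V := hVcov0
  have hVdiam : ∀ k V, V ∈ 𝒱 k → ∀ p ∈ V, ∀ q ∈ V, dY p q ≤ s' := hVdiam0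
  have hVsep : ∀ k V, V ∈ 𝒱 k → ∀ V', V' ∈ 𝒱 k → V ≠ V' → ∀ p ∈ V, ∀ q ∈ V',
      c * s' ≤ dY p q := hVsep0
  have hR1 : r₁ * (s' + 2 * ε) + 2 * ε < 1 := by
    have h1 : r₁ * ε ≤ r₁ * (s' / 8) := mul_le_mul_of_nonneg_left hεs' hr₁0.le
    nlinarith
  have hball2 : ∀ z ∈ K ∩ {w | dist w x ≤ r₁ * τ}, lam * dist z x ≤ r₁ * (s' + 2 * ε) := by
    intro z hz
    calc lam * dist z x ≤ lam * (r₁ * τ) := mul_le_mul_of_nonneg_left hz.2 hlampos.le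
      _ = r₁ * (lam * τ) := by ring
      _ = r₁ * (s' + 2 * ε) := by rw [hlamτ]
  have hεlt1 : ε < 1 := by nlinarith
  have hball : ∀ z ∈ K ∩ {w | dist w x ≤ r₁ * τ}, lam * dist z x < 1 / ε := by
    intro z hz
    have h2 := hball2 z hz
    have h3 : r₁ * (s' + 2 * ε) < 1 := by linarith
    have h4 : (1:ℝ) ≤ 1 / ε := by rw [le_div_iff₀ hεpos]; linarith
    linarith
  have key : ∀ z, z ∈ K ∩ {w | dist w x ≤ r₁ * τ} →
      ∃ k : Fin (n + 1), ∃ V, V ∈ 𝒱 k ∧ ∃ v : Y, v ∈ V ∧ d (Sum.inl z) (Sum.inr v) < ε := by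
    intro z hz
    obtain ⟨v, hv⟩ := hXY z (hball z hz)
    have hvy : dY v y < 1 := by
      have t1 : d (Sum.inr v) (Sum.inr y) ≤ d (Sum.inr v) (Sum.inl z)
          + d (Sum.inl z) (Sum.inl x) + d (Sum.inl x) (Sum.inr y) := by
        calc d (Sum.inr v) (Sum.inr y)
            ≤ d (Sum.inr v) (Sum.inl x) + d (Sum.inl x) (Sum.inr y) := htri _ _ _
          _ ≤ (d (Sum.inr v) (Sum.inl z) + d (Sum.inl z) (Sum.inl x))
              + d (Sum.inl x) (Sum.inr y) := by
                linarith [htri (Sum.inr v : X ⊕ Y) (Sum.inl z) (Sum.inl x)]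
      have e1 : d (Sum.inr v) (Sum.inr y) = dY v y := hYY v y
      have e2 : d (Sum.inr v) (Sum.inl z) = d (Sum.inl z) (Sum.inr v) := hsymm _ _
      have e3 : d (Sum.inl z) (Sum.inl x) = lam * dist z x := hXX z x
      have h2 := hball2 z hz
      rw [e1, e2, e3] at t1
      linarith
    obtain ⟨k, V, hV, hvV⟩ := hVcov v hvy
    exact ⟨k, V, hV, v, hvV, hv⟩
  rcases (K ∩ {w | dist w x ≤ r₁ * τ}).eq_empty_or_nonempty with hemp | ⟨z₀, hz₀⟩
  · refine ⟨fun _ => ∅, by simp, ?_, by simp, by simp⟩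
    rw [hemp]; simp
  · obtain ⟨k₀', V₀', hV₀', v₀, hv₀, -⟩ := key z₀ hz₀
    have : Nonempty Y := ⟨v₀⟩
    choose! kf Vf hVf vf hvf hdf using key
    refine ⟨fun k₀ => {S | ∃ V₀, V₀ ∈ 𝒱 k₀ ∧
      S = {z | z ∈ K ∩ {w | dist w x ≤ r₁ * τ} ∧ kf z = k₀ ∧ Vf z = V₀}}, ?_, ?_, ?_, ?_⟩
    · rintro k S ⟨V₀, hV₀, rfl⟩ z ⟨hz, -, -⟩
      exact hz
    · intro z hz
      exact ⟨kf z, _, ⟨Vf z, hVf z hz, rfl⟩, hz, rfl, rfl⟩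
    · rintro k S ⟨V₀, hV₀, rfl⟩ z ⟨hz, hkz, hVz⟩ z' ⟨hz', hkz', hVz'⟩
      show dist z z' ≤ τ
      have m1 : vf z ∈ V₀ := by rw [← hVz]; exact hvf z hz
      have m2 : vf z' ∈ V₀ := by rw [← hVz']; exact hvf z' hz'
      have h2 : dY (vf z) (vf z') ≤ s' := hVdiam k V₀ hV₀ _ m1 _ m2
      have h3 : d (Sum.inl z) (Sum.inr (vf z)) < ε := hdf z hz
      have h4 : d (Sum.inl z') (Sum.inr (vf z')) < ε := hdf z' hz'
      have t1 : d (Sum.inl z) (Sum.inl z') ≤ d (Sum.inl z) (Sum.inr (vf z))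
          + d (Sum.inr (vf z)) (Sum.inr (vf z')) + d (Sum.inr (vf z')) (Sum.inl z') := by
        calc d (Sum.inl z) (Sum.inl z')
            ≤ d (Sum.inl z) (Sum.inr (vf z)) + d (Sum.inr (vf z)) (Sum.inl z') := htri _ _ _
          _ ≤ d (Sum.inl z) (Sum.inr (vf z)) + (d (Sum.inr (vf z)) (Sum.inr (vf z'))
              + d (Sum.inr (vf z')) (Sum.inl z')) := by
                linarith [htri (Sum.inr (vf z) : X ⊕ Y) (Sum.inr (vf z')) (Sum.inl z')]
          _ = _ := by ring
      have e1 : d (Sum.inl z) (Sum.inl z') = lam * dist z z' := hXX _ _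
      have e2 : d (Sum.inr (vf z)) (Sum.inr (vf z')) = dY (vf z) (vf z') := hYY _ _
      have e3 : d (Sum.inr (vf z')) (Sum.inl z') = d (Sum.inl z') (Sum.inr (vf z')) := hsymm _ _
      rw [e1, e2, e3] at t1
      have hfin : lam * dist z z' ≤ lam * τ := by rw [hlamτ]; linarith
      exact le_of_mul_le_mul_left hfin hlampos
    · rintro k S ⟨V₀, hV₀, rfl⟩ S' ⟨V₀', hV₀', rfl⟩ hne z ⟨hz, hkz, hVz⟩ z' ⟨hz', hkz', hVz'⟩
      show c / 2 * τ ≤ dist z z'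
      have hVne : V₀ ≠ V₀' := by
        rintro rfl; exact hne rfl
      have m1 : vf z ∈ V₀ := by rw [← hVz]; exact hvf z hz
      have m2 : vf z' ∈ V₀' := by rw [← hVz']; exact hvf z' hz'
      have hsep : c * s' ≤ dY (vf z) (vf z') := hVsep k V₀ hV₀ V₀' hV₀' hVne _ m1 _ m2
      have h3 : d (Sum.inl z) (Sum.inr (vf z)) < ε := hdf z hz
      have h4 : d (Sum.inl z') (Sum.inr (vf z')) < ε := hdf z' hz'
      have t1 : d (Sum.inr (vf z)) (Sum.inr (vf z')) ≤ d (Sum.inr (vf z)) (Sum.inl z)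
          + d (Sum.inl z) (Sum.inl z') + d (Sum.inl z') (Sum.inr (vf z')) := by
        calc d (Sum.inr (vf z)) (Sum.inr (vf z'))
            ≤ d (Sum.inr (vf z)) (Sum.inl z') + d (Sum.inl z') (Sum.inr (vf z')) := htri _ _ _
          _ ≤ (d (Sum.inr (vf z)) (Sum.inl z) + d (Sum.inl z) (Sum.inl z'))
              + d (Sum.inl z') (Sum.inr (vf z')) := by
                linarith [htri (Sum.inr (vf z) : X ⊕ Y) (Sum.inl z) (Sum.inl z')]
      have e1 : d (Sum.inl z) (Sum.inl z') = lam * dist z z' := hXX _ _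
      have e2 : d (Sum.inr (vf z)) (Sum.inr (vf z')) = dY (vf z) (vf z') := hYY _ _
      have e3 : d (Sum.inr (vf z)) (Sum.inl z) = d (Sum.inl z) (Sum.inr (vf z)) := hsymm _ _
      rw [e2, e3, e1] at t1
      have h5 : c * s' - 2 * ε ≤ lam * dist z z' := by linarith
      have h6 : lam * (c / 2 * τ) ≤ lam * dist z z' := by
        have e4 : lam * (c / 2 * τ) = c / 2 * (lam * τ) := by ring
        rw [e4, hlamτ]
        rw [hεdef] at h5 ⊢
        nlinarith
      exact le_of_mul_le_mul_left h6 hlampos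

/-- If `K ⊆ X` has finite linearly controlled dimension and the
convergence of `X` to its tangents is uniform on `K`, the tangents having
`dim_N(B_Y(⋆,1),c,s) ≤ n` for all `0 < s < s₀` with constants `c, s₀` independent of
the point and the tangent, then `K` has linearly controlled dimension at most `n`. -/
theorem lc_dim_from_uniform_tangents {X : Type*} [MetricSpace X] (K : Set X)
    (cbar sbar : ℝ) (nbar : ℕ) (hcbar : cbar ∈ Set.Ioo (0:ℝ) 1) (hsbar : 0 < sbar)
    (hK : ∀ s : ℝ, 0 < s → s ≤ sbar → dimNle (fun a b : X => dist a b) K cbar s nbar)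
    (n : ℕ) (c s₀ : ℝ) (hc : c ∈ Set.Ioo (0:ℝ) 1) (hs₀ : 0 < s₀)
    (htan : ∀ ε : ℝ, 0 < ε → ∃ lε : ℝ, 0 < lε ∧ ∀ x ∈ K, ∀ lam : ℝ, lε ≤ lam →
      ∃ (Y : Type u) (dY : Y → Y → ℝ) (y : Y) (d : X ⊕ Y → X ⊕ Y → ℝ),
        IsMetricDist dY ∧
        (∀ s : ℝ, 0 < s → s < s₀ → dimNle dY {z : Y | dY z y < 1} c s n) ∧
        IsCoupling (fun a b : X => lam * dist a b) dY x y ε d) :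
    ∃ c' t₀ : ℝ, 0 < c' ∧ 0 < t₀ ∧ ∀ t : ℝ, 0 < t → t < t₀ →
      dimNle (fun a b : X => dist a b) K c' t n := by
  classical
  obtain ⟨hcb0, hcb1⟩ := hcbar
  obtain ⟨hc0, hc1⟩ := hc
  set c₂ : ℝ := min (c / 2) cbar with hc₂def
  have hc₂pos : 0 < c₂ := lt_min (by linarith) hcb0
  have hc₂le1 : c₂ ≤ 1 := le_trans (min_le_right _ _) hcb1.le
  set r₁ : ℝ := (8 / c₂) ^ (nbar + 1) with hr₁def
  have h8c : (1:ℝ) ≤ 8 / c₂ := by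
    rw [le_div_iff₀ hc₂pos]; linarith
  have hr₁ : 1 ≤ r₁ := one_le_pow₀ h8c
  obtain ⟨t₁, ht₁pos, hL1⟩ := lemL1 K n c s₀ ⟨hc0, hc1⟩ hs₀ htan r₁ hr₁
  refine ⟨c₂ * (c₂ / 16) ^ nbar, 2 ^ nbar * min sbar t₁,
    by positivity, by positivity, ?_⟩
  intro t ht htlt
  set s : ℝ := t / 2 ^ nbar with hsdef2
  have h2pow : (0:ℝ) < 2 ^ nbar := by positivity
  have hspos : 0 < s := by positivity
  have hslt : s < min sbar t₁ := by
    rw [hsdef2, div_lt_iff₀ h2pow]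
    calc t < 2 ^ nbar * min sbar t₁ := htlt
      _ = min sbar t₁ * 2 ^ nbar := mul_comm _ _
  have hssbar : s ≤ sbar := (lt_of_lt_of_le hslt (min_le_left _ _)).le
  have hst₁ : s < t₁ := lt_of_lt_of_le hslt (min_le_right _ _)
  obtain ⟨𝒰, hUsub, hUcov, hUdiam, hUsep⟩ := hK s hspos hssbar
  let G : ℕ → Set X := fun j => if h : j < nbar + 1 then ⋃₀ (𝒰 ⟨j, h⟩) else ∅
  have hGsub : ∀ j, G j ⊆ K := by
    intro j
    by_cases h : j < nbar + 1
    · simp only [G, dif_pos h]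
      rintro p ⟨U, hU, hpU⟩
      exact hUsub ⟨j, h⟩ U hU hpU
    · simp only [G, dif_neg h]
      exact empty_subset K
  have hGdim : ∀ j, ∀ τ : ℝ, 0 < τ → τ ≤ s → s ≤ r₁ * τ →
      dimNle (fun p q : X => dist p q) (G j) c₂ τ n := by
    intro j τ hτ h1 h2
    by_cases h : j < nbar + 1
    · simp only [G, dif_pos h]
      have hl : ∀ x ∈ K, dimNle (fun p q : X => dist p q)
          (K ∩ {z | dist z x ≤ r₁ * τ}) (c / 2) τ n :=
        fun x hx => hL1 τ hτ (lt_of_le_of_lt h1 hst₁) x hx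
      rw [hc₂def]
      exact lemD (by linarith : (0:ℝ) < c / 2) hcb0 hτ h1 h2 (hUsub ⟨j, h⟩)
        (fun U hU p hp q hq => hUdiam ⟨j, h⟩ U hU p hp q hq)
        (fun U hU V hV hne p hp q hq => hUsep ⟨j, h⟩ U hU V hV hne p hp q hq) hl
    · simp only [G, dif_neg h]
      exact ⟨fun _ => ∅, by simp, by simp, by simp, by simp⟩
  let F : ℕ → Set X := fun m =>
    Nat.rec (motive := fun _ => Set X) (G 0) (fun m' S => S ∪ G (m' + 1)) m
  have hmain : ∀ m : ℕ, m ≤ nbar →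
      dimNle (fun p q : X => dist p q) (F m) (c₂ * (c₂ / 16) ^ m) (2 ^ m * s) n := by
    intro m
    induction m with
    | zero =>
      intro _
      have h := hGdim 0 s hspos le_rfl (le_mul_of_one_le_left hspos.le hr₁)
      simp only [pow_zero, mul_one, one_mul]; exact h
    | succ m ih =>
      intro hm1
      have hm : m ≤ nbar := by omega
      have ihm := ih hm
      have e1 : ((c₂:ℝ) / 16) ^ m * 2 ^ m = (c₂ / 8) ^ m := by
        rw [← mul_pow]; congr 1; ring
      have ha : 0 < c₂ * (c₂ / 16) ^ m := by positivity
      have ha1 : c₂ * (c₂ / 16) ^ m ≤ 1 := by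
        have p1 : ((c₂:ℝ) / 16) ^ m ≤ 1 := pow_le_one₀ (by positivity) (by linarith)
        have p2 : (0:ℝ) ≤ (c₂ / 16) ^ m := by positivity
        nlinarith
      have hτpos : 0 < c₂ * (c₂ / 16) ^ m * (2 ^ m * s) / 8 := by positivity
      have hid : c₂ * (c₂ / 16) ^ m * (2 ^ m * s) / 8 = (c₂ / 8) ^ (m + 1) * s := by
        rw [pow_succ, ← e1]; ring
      have hτles : c₂ * (c₂ / 16) ^ m * (2 ^ m * s) / 8 ≤ s := by
        rw [hid]
        have p1 : ((c₂:ℝ) / 8) ^ (m + 1) ≤ 1 := pow_le_one₀ (by positivity) (by linarith)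
        nlinarith
      have hrτ : s ≤ r₁ * (c₂ * (c₂ / 16) ^ m * (2 ^ m * s) / 8) := by
        rw [hid, hr₁def]
        have hinv : ((8:ℝ) / c₂) ^ (m + 1) * (c₂ / 8) ^ (m + 1) = 1 := by
          rw [← mul_pow]
          have h : (8 / c₂) * (c₂ / 8) = 1 := by field_simp
          rw [h, one_pow]
        have hsplit : ((8:ℝ) / c₂) ^ (nbar + 1) = (8 / c₂) ^ (nbar - m) * (8 / c₂) ^ (m + 1) := by
          rw [← pow_add]; congr 1; omega
        have hge : (1:ℝ) ≤ (8 / c₂) ^ (nbar - m) := one_le_pow₀ h8c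
        calc s = 1 * s := (one_mul s).symm
          _ ≤ (8 / c₂) ^ (nbar - m) * s := mul_le_mul_of_nonneg_right hge hspos.le
          _ = (8 / c₂) ^ (nbar - m) * (((8 / c₂) ^ (m + 1) * (c₂ / 8) ^ (m + 1)) * s) := by
              rw [hinv, one_mul]
          _ = (8 / c₂) ^ (nbar + 1) * ((c₂ / 8) ^ (m + 1) * s) := by rw [hsplit]; ring
      have hB := hGdim (m + 1) (c₂ * (c₂ / 16) ^ m * (2 ^ m * s) / 8) hτpos hτles hrτ
      have hglue := glue_lemma ha ha1 hc₂pos hc₂le1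
        (by positivity : (0:ℝ) < 2 ^ m * s) ihm hB
      have ec : c₂ * (c₂ / 16) ^ (m + 1) = c₂ * (c₂ / 16) ^ m * c₂ / 16 := by
        rw [pow_succ]; ring
      have es : (2:ℝ) ^ (m + 1) * s = 2 * (2 ^ m * s) := by rw [pow_succ]; ring
      rw [ec, es]
      exact hglue
  have hFsubK : ∀ m, F m ⊆ K := by
    intro m
    induction m with
    | zero => exact hGsub 0
    | succ m ih => exact union_subset ih (hGsub (m + 1))
  have hGF : ∀ m, ∀ j, j ≤ m → G j ⊆ F m := by
    intro m
    induction m with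
    | zero =>
      intro j hj
      have hj0 : j = 0 := Nat.le_zero.mp hj
      subst hj0
      intro q hq; exact hq
    | succ m ih =>
      intro j hj
      rcases Nat.lt_or_ge j (m + 1) with h | h
      · exact (ih j (by omega)).trans subset_union_left
      · have hj1 : j = m + 1 := by omega
        subst hj1
        exact subset_union_right
  have hFK : F nbar = K := by
    apply Subset.antisymm (hFsubK nbar)
    intro p hp
    obtain ⟨k, U, hU, hpU⟩ := hUcov p hp
    have hmem : p ∈ G k.val := by
      simp only [G, dif_pos k.isLt]
      exact ⟨U, hU, hpU⟩
    exact hGF nbar k.val (by omega) hmem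
  have hts : (2:ℝ) ^ nbar * s = t := by
    rw [hsdef2]; field_simp
  have hfin := hmain nbar le_rfl
  rw [hFK, hts] at hfin
  exact hfin
end
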